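/- arXiv:2201.05949 — 4 statements merged into one kernel-verified Lean document; each statement's English description precedes it below -/
import Mathlib

section
/- Let Ω ⊆ ℂ be open, λ₀ ∈ Ω, and let 𝔏 : Ω → Mat_N(ℂ) be an analytic family of matrices. Let K := ker 𝔏(λ₀) ⊆ ℂ^N and R := range 𝔏(λ₀) ⊆ ℂ^N, and suppose the transversality condition of Crandall–Rabinowitz holds: the image 𝔏'(λ₀)(K) and R form an internal direct sum decomposition 𝔏'(λ₀)(K) ⊕ R = ℂ^N. Then the order of vanishing at λ₀ of λ ↦ det 𝔏(λ) equals dim K = dim ker 𝔏(λ₀). -/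
private theorem analyticAt_det_aux {n : ℕ} {A : ℂ → Matrix (Fin n) (Fin n) ℂ} {x : ℂ}
    (h : ∀ i j, AnalyticAt ℂ (fun z => A z i j) x) :
    AnalyticAt ℂ (fun z => (A z).det) x := by
  simp only [Matrix.det_apply]
  apply Finset.analyticAt_fun_sum
  intro σ _
  have e : (fun z => Equiv.Perm.sign σ • ∏ i, A z (σ i) i)
       = fun z => ((Equiv.Perm.sign σ : ℤ) : ℂ) * ∏ i, A z (σ i) i := by
    funext z; rw [Units.smul_def, zsmul_eq_mul]
  rw [e]
  exact analyticAt_const.mul (Finset.analyticAt_fun_prod _ fun i _ => h (σ i) i)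

/-- Crandall–Rabinowitz transversality: if `𝔏` is an analytic matrix family on an
open `Ω ⊆ ℂ`, `λ₀ ∈ Ω`, `K = ker 𝔏(λ₀)`, `R = range 𝔏(λ₀)`, and
`𝔏'(λ₀)(K) ⊕ R = ℂ^N` is an internal direct sum, then the order of vanishing at
`λ₀` of `λ ↦ det 𝔏(λ)` equals `dim K`. -/
theorem orderOfVanishing_eq_dim_ker_of_transversal
    {N : ℕ} (Ω : Set ℂ) (hΩ : IsOpen Ω) (lam₀ : ℂ) (hlam₀ : lam₀ ∈ Ω)
    (𝔏 : ℂ → Matrix (Fin N) (Fin N) ℂ)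
    (hanal : ∀ i j, AnalyticOnNhd ℂ (fun z => 𝔏 z i j) Ω)
    (L' : Matrix (Fin N) (Fin N) ℂ)
    (hder : ∀ i j, HasDerivAt (fun z => 𝔏 z i j) (L' i j) lam₀)
    (htrans_inf :
      (LinearMap.ker (𝔏 lam₀).mulVecLin).map L'.mulVecLin ⊓
        LinearMap.range (𝔏 lam₀).mulVecLin = ⊥)
    (htrans_sup :
      (LinearMap.ker (𝔏 lam₀).mulVecLin).map L'.mulVecLin ⊔
        LinearMap.range (𝔏 lam₀).mulVecLin = ⊤) :
    ∃ g : ℂ → ℂ, AnalyticAt ℂ g lam₀ ∧ g lam₀ ≠ 0 ∧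
      ∀ᶠ z in nhds lam₀,
        (𝔏 z).det =
          (z - lam₀) ^ (Module.finrank ℂ (LinearMap.ker (𝔏 lam₀).mulVecLin)) * g z := by
  classical
  set K := LinearMap.ker (𝔏 lam₀).mulVecLin with hKdef
  set k := Module.finrank ℂ K with hkdef
  obtain ⟨K', hcompl⟩ := Submodule.exists_isCompl K
  set n' := Module.finrank ℂ K' with hn'def
  have hkN : k + n' = N := by
    have := Submodule.finrank_add_eq_of_isCompl hcompl
    simpa [Module.finrank_pi] using this
  have hkle : k ≤ N := by omega
  set bK := Module.finBasis ℂ K with hbK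
  set bK' := Module.finBasis ℂ K' with hbK'
  set v : Fin N → (Fin N → ℂ) := fun j =>
    if h : (j : ℕ) < k then (bK ⟨j, h⟩ : Fin N → ℂ)
    else (bK' ⟨(j : ℕ) - k, by omega⟩ : Fin N → ℂ) with hvdef
  have hKspan : K = Submodule.span ℂ (Set.range fun i => ((bK i : Fin N → ℂ))) := by
    conv_lhs => rw [← Submodule.map_subtype_top K, ← bK.span_eq]
    rw [Submodule.map_span, ← Set.range_comp]
    rfl
  have hK'span : K' = Submodule.span ℂ (Set.range fun i => ((bK' i : Fin N → ℂ))) := by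
    conv_lhs => rw [← Submodule.map_subtype_top K', ← bK'.span_eq]
    rw [Submodule.map_span, ← Set.range_comp]
    rfl
  have hvK : ∀ (i : Fin k), (bK i : Fin N → ℂ) = v ⟨(i : ℕ), by omega⟩ := by
    intro i
    simp only [hvdef]
    split
    · rfl
    · exact absurd i.2 (by assumption)
  have hvK' : ∀ (i : Fin n'), (bK' i : Fin N → ℂ) = v ⟨k + (i : ℕ), by omega⟩ := by
    intro i
    simp only [hvdef]
    split
    · exact absurd (by assumption) (by omega)
    · congr 1
      apply congrArg
      apply Fin.ext
      simp
  have hspanv : ⊤ ≤ Submodule.span ℂ (Set.range v) := by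
    rw [← hcompl.sup_eq_top]
    apply sup_le
    · rw [hKspan, Submodule.span_le]
      rintro x ⟨i, rfl⟩
      apply Submodule.subset_span
      exact ⟨_, (hvK i).symm⟩
    · rw [hK'span, Submodule.span_le]
      rintro x ⟨i, rfl⟩
      apply Submodule.subset_span
      exact ⟨_, (hvK' i).symm⟩
  have hcard : Fintype.card (Fin N) = Module.finrank ℂ (Fin N → ℂ) := by
    simp [Module.finrank_pi]
  set vb : Module.Basis (Fin N) ℂ (Fin N → ℂ) := basisOfTopLeSpanOfCardEqFinrank v hspanv hcard with hvb
  set w : Fin N → (Fin N → ℂ) := fun j =>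
    if (j : ℕ) < k then L'.mulVec (v j) else (𝔏 lam₀).mulVec (v j) with hwdef
  have hwK : ∀ (i : Fin k), L'.mulVec (bK i : Fin N → ℂ) = w ⟨(i : ℕ), by omega⟩ := by
    intro i
    simp only [hwdef]
    rw [if_pos (show ((⟨(i:ℕ), by omega⟩ : Fin N) : ℕ) < k from i.2), ← hvK i]
  have hwK' : ∀ (i : Fin n'), (𝔏 lam₀).mulVec (bK' i : Fin N → ℂ) = w ⟨k + (i : ℕ), by omega⟩ := by
    intro i
    simp only [hwdef]
    rw [if_neg (show ¬((⟨k + (i:ℕ), by omega⟩ : Fin N) : ℕ) < k by simp), ← hvK' i]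
  have hspanw : ⊤ ≤ Submodule.span ℂ (Set.range w) := by
    rw [← htrans_sup]
    apply sup_le
    · rw [hKspan, Submodule.map_span, Submodule.span_le]
      rintro x ⟨y, ⟨i, rfl⟩, rfl⟩
      apply Submodule.subset_span
      exact ⟨_, (hwK i).symm⟩
    · have h0 : Submodule.map (𝔏 lam₀).mulVecLin K = ⊥ := by
        rw [eq_bot_iff]
        rintro x ⟨y, hy, rfl⟩
        simpa using LinearMap.mem_ker.mp hy
      have hr : LinearMap.range (𝔏 lam₀).mulVecLin = Submodule.map (𝔏 lam₀).mulVecLin K' := by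
        rw [LinearMap.range_eq_map, ← hcompl.sup_eq_top, Submodule.map_sup, h0, bot_sup_eq]
      rw [hr, hK'span, Submodule.map_span, Submodule.span_le]
      rintro x ⟨y, ⟨i, rfl⟩, rfl⟩
      apply Submodule.subset_span
      exact ⟨_, (hwK' i).symm⟩
  set wb : Module.Basis (Fin N) ℂ (Fin N → ℂ) := basisOfTopLeSpanOfCardEqFinrank w hspanw hcard with hwb
  set Q : Matrix (Fin N) (Fin N) ℂ := Matrix.of fun i j => v j i with hQdef
  set P : Matrix (Fin N) (Fin N) ℂ := Matrix.of fun i j => w j i with hPdef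
  have hQb : Q = (Pi.basisFun ℂ (Fin N)).toMatrix vb := by
    ext i j
    rw [Module.Basis.toMatrix_apply, Pi.basisFun_repr, hvb, coe_basisOfTopLeSpanOfCardEqFinrank]
    rfl
  have hPb : P = (Pi.basisFun ℂ (Fin N)).toMatrix wb := by
    ext i j
    rw [Module.Basis.toMatrix_apply, Pi.basisFun_repr, hwb, coe_basisOfTopLeSpanOfCardEqFinrank]
    rfl
  have hQunit : IsUnit Q.det := by
    rw [hQb]
    haveI := (Pi.basisFun ℂ (Fin N)).invertibleToMatrix vb
    exact (Matrix.isUnit_iff_isUnit_det _).mp (isUnit_of_invertible _)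
  have hPunit : IsUnit P.det := by
    rw [hPb]
    haveI := (Pi.basisFun ℂ (Fin N)).invertibleToMatrix wb
    exact (Matrix.isUnit_iff_isUnit_det _).mp (isUnit_of_invertible _)
  set M : ℂ → Matrix (Fin N) (Fin N) ℂ := fun z => P⁻¹ * 𝔏 z * Q with hMdef
  -- column formula
  have hcolB : ∀ (B : Matrix (Fin N) (Fin N) ℂ) (j : Fin N),
      (fun i => (P⁻¹ * B * Q) i j) = P⁻¹.mulVec (B.mulVec (v j)) := by
    intro B j
    have hq : Q.mulVec (Pi.single j 1) = v j := by
      ext i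
      simp [hQdef]
    rw [← hq, Matrix.mulVec_mulVec, Matrix.mulVec_mulVec]
    ext i
    simp
  have hPw : ∀ j : Fin N, P⁻¹.mulVec (w j) = fun i => (1 : Matrix (Fin N) (Fin N) ℂ) i j := by
    intro j
    have hw : w j = P.mulVec (Pi.single j 1) := by
      ext i
      simp [hPdef]
    rw [hw, Matrix.mulVec_mulVec, Matrix.nonsing_inv_mul _ hPunit]
    ext i
    simp [Matrix.one_apply, Pi.single_apply, eq_comm]
  have hvmemK : ∀ j : Fin N, (j : ℕ) < k → v j ∈ K := by
    intro j h
    simp only [hvdef]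
    rw [dif_pos h]
    exact (bK ⟨(j : ℕ), h⟩).2
  have hM0 : ∀ j : Fin N, (j : ℕ) < k → ∀ i, M lam₀ i j = 0 := by
    intro j h i
    have hc := congrFun (hcolB (𝔏 lam₀) j) i
    have hker : (𝔏 lam₀).mulVec (v j) = 0 := by
      have := LinearMap.mem_ker.mp (hvmemK j h)
      simpa [Matrix.mulVecLin_apply] using this
    simpa [hMdef, hker, Matrix.mulVec_zero] using hc
  have hM1 : ∀ j : Fin N, ¬((j : ℕ) < k) → ∀ i,
      M lam₀ i j = (1 : Matrix (Fin N) (Fin N) ℂ) i j := by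
    intro j h i
    have hc := congrFun (hcolB (𝔏 lam₀) j) i
    have hwj : (𝔏 lam₀).mulVec (v j) = w j := by
      simp only [hwdef]
      rw [if_neg h]
    rw [hwj] at hc
    simp only [hMdef]
    rw [hc, hPw j]
  have hdM1 : ∀ j : Fin N, (j : ℕ) < k → ∀ i,
      (P⁻¹ * L' * Q) i j = (1 : Matrix (Fin N) (Fin N) ℂ) i j := by
    intro j h i
    have hc := congrFun (hcolB L' j) i
    have hwj : L'.mulVec (v j) = w j := by
      simp only [hwdef]
      rw [if_pos h]
    rw [hwj] at hc
    rw [hc, hPw j]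
  -- entries as finite sums
  have hentry : ∀ (B : Matrix (Fin N) (Fin N) ℂ) (i j : Fin N),
      (P⁻¹ * B * Q) i j = ∑ m, ∑ l, P⁻¹ i l * B l m * Q m j := by
    intro B i j
    simp [Matrix.mul_apply, Finset.sum_mul]
  have hMder : ∀ i j, HasDerivAt (fun z => M z i j) ((P⁻¹ * L' * Q) i j) lam₀ := by
    intro i j
    have heq : (fun z => M z i j) = fun z => ∑ m, ∑ l, P⁻¹ i l * 𝔏 z l m * Q m j :=
      funext fun z => hentry (𝔏 z) i j
    rw [heq, hentry L' i j]
    apply HasDerivAt.fun_sum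
    intro m _
    apply HasDerivAt.fun_sum
    intro l _
    exact ((hder l m).const_mul (P⁻¹ i l)).mul_const (Q m j)
  have hManal : ∀ i j, AnalyticOnNhd ℂ (fun z => M z i j) Ω := by
    intro i j
    have heq : (fun z => M z i j) = fun z => ∑ m, ∑ l, P⁻¹ i l * 𝔏 z l m * Q m j :=
      funext fun z => hentry (𝔏 z) i j
    rw [heq]
    intro x hx
    apply Finset.analyticAt_fun_sum
    intro m _
    apply Finset.analyticAt_fun_sum
    intro l _
    exact (analyticAt_const.mul (hanal l m x hx)).mul analyticAt_const
  set Nm : ℂ → Matrix (Fin N) (Fin N) ℂ := fun z => Matrix.of fun i j =>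
    if (j : ℕ) < k then dslope (fun t => M t i j) lam₀ z else M z i j with hNmdef
  have hNanal : ∀ i j, AnalyticAt ℂ (fun z => Nm z i j) lam₀ := by
    intro i j
    by_cases h : (j : ℕ) < k
    · have heq : (fun z => Nm z i j) = dslope (fun t => M t i j) lam₀ := by
        funext z
        simp only [hNmdef, Matrix.of_apply, if_pos h]
      rw [heq]
      have hd : DifferentiableOn ℂ (dslope (fun t => M t i j) lam₀) Ω :=
        (Complex.differentiableOn_dslope (hΩ.mem_nhds hlam₀)).mpr ((hManal i j).differentiableOn)
      exact (hd.analyticOnNhd hΩ) lam₀ hlam₀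
    · have heq : (fun z => Nm z i j) = fun z => M z i j := by
        funext z
        simp only [hNmdef, Matrix.of_apply, if_neg h]
      rw [heq]
      exact hManal i j lam₀ hlam₀
  have hN1 : Nm lam₀ = 1 := by
    ext i j
    by_cases h : (j : ℕ) < k
    · simp only [hNmdef, Matrix.of_apply, if_pos h]
      rw [dslope_same, (hMder i j).deriv]
      exact hdM1 j h i
    · simp only [hNmdef, Matrix.of_apply, if_neg h]
      exact hM1 j h i
  have hfilter : (Finset.univ.filter fun j : Fin N => (j : ℕ) < k).card = k := by
    have he : (Finset.univ.filter fun j : Fin N => (j : ℕ) < k)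
        = Finset.univ.map (Fin.castLEEmb hkle) := by
      ext j
      simp only [Finset.mem_filter, Finset.mem_univ, true_and, Finset.mem_map]
      constructor
      · intro h
        exact ⟨⟨(j : ℕ), h⟩, by apply Fin.ext; rfl⟩
      · rintro ⟨i, -, rfl⟩
        simpa using i.2
    rw [he]
    simp
  have hprod : ∀ z : ℂ,
      (∏ j : Fin N, if (j : ℕ) < k then z - lam₀ else 1) = (z - lam₀) ^ k := by
    intro z
    rw [Finset.prod_ite, Finset.prod_const, Finset.prod_const, one_pow, mul_one, hfilter]
  have hfac : ∀ z : ℂ, (M z).det = (z - lam₀) ^ k * (Nm z).det := by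
    intro z
    have hM : M z = Matrix.of fun (i j : Fin N) =>
        (if (j : ℕ) < k then z - lam₀ else 1) * Nm z i j := by
      ext i j
      by_cases h : (j : ℕ) < k
      · have h2 := sub_smul_dslope (fun t => M t i j) lam₀ z
        rw [smul_eq_mul] at h2
        simp only [Matrix.of_apply, if_pos h, hNmdef]
        rw [h2, hM0 j h i, sub_zero]
      · simp only [Matrix.of_apply, if_neg h, hNmdef]
        rw [one_mul]
    rw [hM, Matrix.det_mul_row, hprod]
  -- final assembly
  have hMzdet : ∀ z : ℂ, (M z).det = P.det⁻¹ * (𝔏 z).det * Q.det := by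
    intro z
    simp only [hMdef]
    rw [Matrix.det_mul, Matrix.det_mul, Matrix.det_nonsing_inv, Ring.inverse_eq_inv]
  have hPne : P.det ≠ 0 := hPunit.ne_zero
  have hQne : Q.det ≠ 0 := hQunit.ne_zero
  refine ⟨fun z => P.det * Q.det⁻¹ * (Nm z).det, ?_, ?_, ?_⟩
  · exact analyticAt_const.mul (analyticAt_det_aux hNanal)
  · show P.det * Q.det⁻¹ * (Nm lam₀).det ≠ 0
    rw [hN1]
    simp only [Matrix.det_one, mul_one]
    exact mul_ne_zero hPne (inv_ne_zero hQne)
  · apply Filter.Eventually.of_forall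
    intro z
    show (𝔏 z).det = (z - lam₀) ^ k * (P.det * Q.det⁻¹ * (Nm z).det)
    have h1 := hfac z
    rw [hMzdet z] at h1
    field_simp at h1 ⊢
    linear_combination h1
end

section
/- Let Ω ⊆ ℂ be open, λ₀ ∈ Ω, let 𝔏 : Ω → Mat_N(ℂ) be an analytic family of matrices, and set 𝔏_j := 𝔏^{(j)}(λ₀)/j! for j ≥ 0, viewed as linear maps ℂ^N → ℂ^N. For j ≥ 1 let K_j := ⋂_{i=0}^{j-1} ker 𝔏_i. Suppose λ₀ is a κ-transversal eigenvalue of 𝔏, i.e., ℂ^N is the internal direct sum of range 𝔏_0 and the subspaces 𝔏_1(K_1), 𝔏_2(K_2), …, 𝔏_κ(K_κ), and 𝔏_κ(K_κ) ≠ {0}. Then the order of vanishing at λ₀ of λ ↦ det 𝔏(λ) equals ∑_{j=1}^{κ} j · dim 𝔏_j(K_j). -/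
open scoped Nat

lemma iteratedDeriv_eq_factorial_mul_coeff {f : ℂ → ℂ} {x : ℂ}
    {p : FormalMultilinearSeries ℂ ℂ ℂ} (hp : HasFPowerSeriesAt f p x) (n : ℕ) :
    iteratedDeriv n f x = (n ! : ℂ) * p.coeff n := by
  obtain ⟨r, hr⟩ := hp
  have h := hr.factorial_smul (y := (1 : ℂ)) n
  rw [iteratedDeriv_eq_iteratedFDeriv, ← h, nsmul_eq_mul]
  rfl

lemma iteratedDeriv_analytic_add {f g : ℂ → ℂ} {x : ℂ} (hf : AnalyticAt ℂ f x)
    (hg : AnalyticAt ℂ g x) (n : ℕ) :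
    iteratedDeriv n (fun z => f z + g z) x = iteratedDeriv n f x + iteratedDeriv n g x := by
  obtain ⟨p, hp⟩ := hf
  obtain ⟨q, hq⟩ := hg
  have hfg : (fun z => f z + g z) = f + g := rfl
  have hco : (p + q).coeff n = p.coeff n + q.coeff n := rfl
  rw [hfg, iteratedDeriv_eq_factorial_mul_coeff hp, iteratedDeriv_eq_factorial_mul_coeff hq,
    iteratedDeriv_eq_factorial_mul_coeff (hp.add hq), hco, mul_add]

lemma iteratedDeriv_analytic_const_mul {f : ℂ → ℂ} {x : ℂ} (hf : AnalyticAt ℂ f x) (a : ℂ)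
    (n : ℕ) :
    iteratedDeriv n (fun z => a * f z) x = a * iteratedDeriv n f x := by
  obtain ⟨p, hp⟩ := hf
  have h2 : HasFPowerSeriesAt (fun z => a * f z)
      ((ContinuousLinearMap.mul ℂ ℂ a).compFormalMultilinearSeries p) x := by
    obtain ⟨r, hr⟩ := hp
    exact ⟨r, by simpa [Function.comp_def] using
      (ContinuousLinearMap.mul ℂ ℂ a).comp_hasFPowerSeriesOnBall hr⟩
  have hco : ((ContinuousLinearMap.mul ℂ ℂ a).compFormalMultilinearSeries p).coeff n
      = a * p.coeff n := rfl
  rw [iteratedDeriv_eq_factorial_mul_coeff hp, iteratedDeriv_eq_factorial_mul_coeff h2, hco]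
  ring

lemma iteratedDeriv_analytic_sum_const_mul {ι : Type*} [DecidableEq ι] (s : Finset ι)
    (F : ι → ℂ → ℂ) (a : ι → ℂ) {x : ℂ} (hF : ∀ k ∈ s, AnalyticAt ℂ (F k) x) (n : ℕ) :
    iteratedDeriv n (fun z => ∑ k ∈ s, a k * F k z) x
      = ∑ k ∈ s, a k * iteratedDeriv n (F k) x := by
  induction s using Finset.induction_on with
  | empty =>
      simp only [Finset.sum_empty]
      rw [iteratedDeriv_eq_iteratedFDeriv, iteratedFDeriv_zero_fun]
      simp
  | @insert k s' hk ih =>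
      have h1 : AnalyticAt ℂ (fun z => a k * F k z) x :=
        analyticAt_const.mul (hF k (Finset.mem_insert_self k s'))
      have h2 : AnalyticAt ℂ (fun z => ∑ j ∈ s', a j * F j z) x :=
        Finset.analyticAt_fun_sum _ fun j hj =>
          analyticAt_const.mul (hF j (Finset.mem_insert_of_mem hj))
      simp only [Finset.sum_insert hk]
      rw [iteratedDeriv_analytic_add h1 h2 n,
        iteratedDeriv_analytic_const_mul (hF k (Finset.mem_insert_self k s')) _ n, ih
          fun j hj => hF j (Finset.mem_insert_of_mem hj)]

/-- Factorization of an analytic function whose first `n` derivatives vanish. -/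
lemma analyticAt_factor_pow {f : ℂ → ℂ} {x : ℂ} (hf : AnalyticAt ℂ f x) (n : ℕ)
    (hv : ∀ i < n, iteratedDeriv i f x = 0) :
    ∃ h : ℂ → ℂ, AnalyticAt ℂ h x ∧ h x = iteratedDeriv n f x / (n ! : ℂ) ∧
      ∀ᶠ z in nhds x, f z = (z - x) ^ n * h z := by
  obtain ⟨p, hp⟩ := hf
  have hcoeff : ∀ i, p.coeff i = iteratedDeriv i f x / (i ! : ℂ) := by
    intro i
    rw [iteratedDeriv_eq_factorial_mul_coeff hp]
    rw [mul_div_cancel_left₀ _ (by exact_mod_cast i.factorial_ne_zero : (i ! : ℂ) ≠ 0)]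
  by_cases hp0 : p = 0
  · refine ⟨0, analyticAt_const, ?_, ?_⟩
    · have h1 : iteratedDeriv n f x = 0 := by
        rw [iteratedDeriv_eq_factorial_mul_coeff hp n, hp0]
        simp [FormalMultilinearSeries.coeff]
      simp [h1]
    · filter_upwards [(hp0 ▸ hp : HasFPowerSeriesAt f 0 x).eventually_eq_zero] with z hz
      simp [hz]
  · set d := p.order with hd
    have hnd : n ≤ d := by
      by_contra hlt
      push_neg at hlt
      have h1 : p.coeff d = 0 := by
        rw [hcoeff d, hv d hlt, zero_div]
      exact p.apply_order_ne_zero hp0 (FormalMultilinearSeries.coeff_eq_zero.mp h1)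
    set h0 : ℂ → ℂ := (Function.swap dslope x)^[d] f with hh0
    have hA0 : AnalyticAt ℂ h0 x := ⟨_, hp.has_fpower_series_iterate_dslope_fslope d⟩
    refine ⟨fun z => (z - x) ^ (d - n) * h0 z,
      (((analyticAt_id.sub analyticAt_const).pow _).mul hA0), ?_, ?_⟩
    · rcases eq_or_lt_of_le hnd with heq | hlt
      · have hdn : d - n = 0 := by omega
        have hval : h0 x = p.coeff d := by
          have h1 := (hp.has_fpower_series_iterate_dslope_fslope d).coeff_zero
            (fun _ => (1 : ℂ))
          have h2 : (FormalMultilinearSeries.fslope^[d] p).coeff 0 = p.coeff (0 + d) :=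
            FormalMultilinearSeries.coeff_iterate_fslope d 0
          rw [hh0, ← h1]
          show (FormalMultilinearSeries.fslope^[d] p).coeff 0 = p.coeff d
          rw [h2, zero_add]
        show (x - x) ^ (d - n) * h0 x = _
        rw [hdn, pow_zero, one_mul, hval, ← heq, hcoeff n]
      · have hn0 : p.coeff n = 0 := by
          rw [FormalMultilinearSeries.coeff_eq_zero]
          exact p.apply_eq_zero_of_lt_order hlt
        have : iteratedDeriv n f x = 0 := by
          rw [iteratedDeriv_eq_factorial_mul_coeff hp, hn0, mul_zero]
        show (x - x) ^ (d - n) * h0 x = _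
        rw [this, zero_div, sub_self, zero_pow (by omega), zero_mul]
    · filter_upwards [Filter.Eventually.of_forall hp.eq_pow_order_mul_iterate_dslope] with z hz
      rw [hz, smul_eq_mul, ← hh0, ← hd, ← mul_assoc, ← pow_add]
      congr 2
      omega

/-- If `λ₀` is a `κ`-transversal eigenvalue of the analytic matrix family `𝔏`,
i.e. `ℂ^N` is the internal direct sum of `range 𝔏₀` and `𝔏_j(K_j)` for
`j = 1, …, κ` (where `𝔏_j = 𝔏^{(j)}(λ₀)/j!` and `K_j = ⋂_{i<j} ker 𝔏_i`), with
`𝔏_κ(K_κ) ≠ {0}`, then the order of vanishing at `λ₀` of `λ ↦ det 𝔏(λ)` equals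
the Esquinas–López-Gómez multiplicity `∑_{j=1}^{κ} j · dim 𝔏_j(K_j)`. -/
theorem orderOfVanishing_eq_chi_of_transversal_eigenvalue
    {N : ℕ} (Ω : Set ℂ) (hΩ : IsOpen Ω) (lam₀ : ℂ) (hlam₀ : lam₀ ∈ Ω)
    (𝔏 : ℂ → Matrix (Fin N) (Fin N) ℂ)
    (hanal : ∀ i j, AnalyticOnNhd ℂ (fun z => 𝔏 z i j) Ω)
    (κ : ℕ) (hκ : 1 ≤ κ)
    (L : ℕ → Matrix (Fin N) (Fin N) ℂ)
    (hL : ∀ k i j, L k i j = iteratedDeriv k (fun z => 𝔏 z i j) lam₀ / (Nat.factorial k : ℂ))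
    (K : ℕ → Submodule ℂ (Fin N → ℂ))
    (hK : ∀ j, K j = ⨅ i ∈ Finset.range j, LinearMap.ker (L i).mulVecLin)
    (V : ℕ → Submodule ℂ (Fin N → ℂ))
    (hV0 : V 0 = LinearMap.range (L 0).mulVecLin)
    (hVj : ∀ j, 1 ≤ j → V j = (K j).map (L j).mulVecLin)
    (hinternal : DirectSum.IsInternal (fun j : Fin (κ + 1) => V j.1))
    (hnontriv : V κ ≠ ⊥) :
    ∃ g : ℂ → ℂ, AnalyticAt ℂ g lam₀ ∧ g lam₀ ≠ 0 ∧
      ∀ᶠ z in nhds lam₀,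
        (𝔏 z).det =
          (z - lam₀) ^ (∑ j ∈ Finset.Icc 1 κ, j * Module.finrank ℂ (V j)) * g z := by
  classical
  rcases Nat.eq_zero_or_pos N with hN0 | hNpos
  · exfalso
    apply hnontriv
    subst hN0
    ext x
    simp only [Submodule.mem_bot]
    constructor
    · intro _
      exact Subsingleton.elim x 0
    · intro _
      rw [Subsingleton.elim x (0 : Fin 0 → ℂ)]
      exact (V κ).zero_mem
  haveI : Nonempty (Fin N) := ⟨⟨0, hNpos⟩⟩
  -- basic facts about K
  have hKker : ∀ {jj : ℕ} {x : Fin N → ℂ}, x ∈ K jj → ∀ {i : ℕ}, i < jj → (L i).mulVec x = 0 := by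
    intro jj x hx i hi
    rw [hK jj] at hx
    simp only [Submodule.mem_iInf, LinearMap.mem_ker] at hx
    have := hx i (Finset.mem_range.mpr hi)
    rwa [Matrix.mulVecLin_apply] at this
  -- collected basis of the direct sum
  set d : Fin (κ + 1) → ℕ := fun j => Module.finrank ℂ (V j.1) with hdDef
  set bV : (j : Fin (κ + 1)) → Module.Basis (Fin (d j)) ℂ (V j.1) :=
    fun j => Module.finBasis ℂ (V j.1) with hbV
  set w := hinternal.collectedBasis bV with hwdef
  have hwmem : ∀ c : (j : Fin (κ + 1)) × Fin (d j), (w c : Fin N → ℂ) ∈ V c.1.1 :=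
    fun c => hinternal.collectedBasis_mem bV c
  have hcard : Fintype.card ((j : Fin (κ + 1)) × Fin (d j)) = N := by
    rw [← Module.finrank_eq_card_basis w, Module.finrank_fin_fun]
  set σ : Fin N ≃ (j : Fin (κ + 1)) × Fin (d j) :=
    Fintype.equivOfCardEq (by rw [Fintype.card_fin, hcard]) with hσ
  -- preimages
  have hex : ∀ c : (j : Fin (κ + 1)) × Fin (d j),
      ∃ x, x ∈ K c.1.1 ∧ (L c.1.1).mulVec x = w c := by
    intro c
    have hwc := hwmem c
    rcases Nat.eq_zero_or_pos c.1.1 with h0 | h1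
    · rw [h0, hV0] at hwc
      obtain ⟨x, hx⟩ := hwc
      refine ⟨x, ?_, ?_⟩
      · rw [h0, hK 0]
        simp
      · rw [h0, ← Matrix.mulVecLin_apply]
        exact hx
    · rw [hVj _ h1] at hwc
      obtain ⟨x, hxK, hx⟩ := hwc
      exact ⟨x, hxK, by rw [← Matrix.mulVecLin_apply]; exact hx⟩
  choose e heK heL using hex
  -- linear independence of the preimages
  have hLI : LinearIndependent ℂ e := by
    rw [Fintype.linearIndependent_iff]
    intro g hsum
    have claim : ∀ jj : ℕ, ∀ c, c.1.1 = jj → g c = 0 := by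
      intro jj
      induction jj using Nat.strong_induction_on with
      | _ jj IH =>
        intro c hc
        have hsum2 : ∑ c', g c' • (L jj).mulVec (e c') = 0 := by
          have h := congrArg ((L jj).mulVecLin) hsum
          simpa [map_sum, Matrix.mulVecLin_apply] using h
        have hterm : ∀ c', g c' • (L jj).mulVec (e c')
            = (if c'.1.1 = jj then g c' else 0) • (w c' : Fin N → ℂ) := by
          intro c'
          rcases lt_trichotomy c'.1.1 jj with hlt | heq | hgt
          · rw [IH _ hlt c' rfl, if_neg (by omega)]
            simp
          · rw [if_pos heq, ← heq, heL c']
          · rw [if_neg (by omega), hKker (heK c') hgt]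
            simp
        rw [Finset.sum_congr rfl fun c' _ => hterm c'] at hsum2
        have hw0 := (Fintype.linearIndependent_iff.mp w.linearIndependent) _ hsum2 c
        rwa [if_pos hc] at hw0
    intro c
    exact claim c.1.1 c rfl
  -- the constant change-of-basis matrix B
  set B : Matrix (Fin N) (Fin N) ℂ := Matrix.of fun r c => e (σ c) r with hBdef
  have hLI' : LinearIndependent ℂ (e ∘ σ) := hLI.comp σ σ.injective
  set bE : Module.Basis (Fin N) ℂ (Fin N → ℂ) :=
    basisOfLinearIndependentOfCardEqFinrank hLI'
      (by rw [Fintype.card_fin, Module.finrank_fin_fun]) with hbE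
  have hBdet : B.det ≠ 0 := by
    have hB : B = (Pi.basisFun ℂ (Fin N)).toMatrix bE := by
      ext r c
      rw [Module.Basis.toMatrix_apply, Pi.basisFun_repr, hbE,
        coe_basisOfLinearIndependentOfCardEqFinrank]
      rfl
    have : Invertible ((Pi.basisFun ℂ (Fin N)).toMatrix bE) :=
      (Pi.basisFun ℂ (Fin N)).invertibleToMatrix bE
    rw [hB]
    exact (Matrix.isUnit_det_of_invertible _).ne_zero
  -- the matrix of basis vectors w
  set Wm : Matrix (Fin N) (Fin N) ℂ := Matrix.of fun r c => (w (σ c) : Fin N → ℂ) r with hWdef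
  have hWdet : Wm.det ≠ 0 := by
    have hW : Wm = (Pi.basisFun ℂ (Fin N)).toMatrix (w.reindex σ.symm) := by
      ext r c
      rw [Module.Basis.toMatrix_apply, Pi.basisFun_repr, Module.Basis.coe_reindex]
      simp
      rfl
    have : Invertible ((Pi.basisFun ℂ (Fin N)).toMatrix (w.reindex σ.symm)) :=
      (Pi.basisFun ℂ (Fin N)).invertibleToMatrix (w.reindex σ.symm)
    rw [hW]
    exact (Matrix.isUnit_det_of_invertible _).ne_zero
  -- analytic factorization of each entry of 𝔏 z *ᵥ e c
  have hfac : ∀ (r : Fin N) (c : (j : Fin (κ + 1)) × Fin (d j)),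
      ∃ h : ℂ → ℂ, AnalyticAt ℂ h lam₀ ∧ h lam₀ = (w c : Fin N → ℂ) r ∧
        ∀ᶠ z in nhds lam₀, ((𝔏 z).mulVec (e c)) r = (z - lam₀) ^ c.1.1 * h z := by
    intro r c
    have hfeq : (fun z => ((𝔏 z).mulVec (e c)) r) = fun z => ∑ k, e c k * 𝔏 z r k := by
      funext z
      simp [Matrix.mulVec, dotProduct, mul_comm]
    have hfA : AnalyticAt ℂ (fun z => ((𝔏 z).mulVec (e c)) r) lam₀ := by
      rw [hfeq]
      exact Finset.analyticAt_fun_sum _ fun k _ => analyticAt_const.mul (hanal r k lam₀ hlam₀)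
    have hiter : ∀ i, iteratedDeriv i (fun z => ((𝔏 z).mulVec (e c)) r) lam₀
        = (i ! : ℂ) * ((L i).mulVec (e c) r) := by
      intro i
      rw [hfeq, iteratedDeriv_analytic_sum_const_mul _ _ _
        (fun k _ => hanal r k lam₀ hlam₀) i]
      have hterm : ∀ k : Fin N, e c k * iteratedDeriv i (fun z => 𝔏 z r k) lam₀
          = (i ! : ℂ) * (L i r k * e c k) := by
        intro k
        have : iteratedDeriv i (fun z => 𝔏 z r k) lam₀ = (i ! : ℂ) * L i r k := by
          rw [hL i r k]
          rw [mul_div_cancel₀ _ (by exact_mod_cast i.factorial_ne_zero : (i ! : ℂ) ≠ 0)]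
        rw [this]
        ring
      rw [Finset.sum_congr rfl fun k _ => hterm k, ← Finset.mul_sum]
      rfl
    have hvanish : ∀ i < c.1.1, iteratedDeriv i (fun z => ((𝔏 z).mulVec (e c)) r) lam₀ = 0 := by
      intro i hi
      rw [hiter i, hKker (heK c) hi]
      simp
    obtain ⟨h, hA, hval, hev⟩ := analyticAt_factor_pow hfA c.1.1 hvanish
    refine ⟨h, hA, ?_, hev⟩
    rw [hval, hiter, heL c,
      mul_div_cancel_left₀ _ (by exact_mod_cast (c.1.1).factorial_ne_zero : ((c.1.1)! : ℂ) ≠ 0)]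
  choose h hA hval hev using hfac
  -- the analytic matrix G
  set G : ℂ → Matrix (Fin N) (Fin N) ℂ := fun z => Matrix.of fun r c => h r (σ c) z with hGdef
  have hGdet_an : AnalyticAt ℂ (fun z => (G z).det) lam₀ := by
    have hdeq : (fun z => (G z).det) = fun z => ∑ π : Equiv.Perm (Fin N),
        ((Equiv.Perm.sign π : ℤ) : ℂ) * ∏ i, h (π i) (σ i) z := by
      funext z
      rw [Matrix.det_apply]
      refine Finset.sum_congr rfl fun π _ => ?_
      rw [Units.smul_def, zsmul_eq_mul]
      rfl
    rw [hdeq]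
    exact Finset.analyticAt_fun_sum _ fun π _ =>
      analyticAt_const.mul (Finset.analyticAt_fun_prod _ fun i _ => hA (π i) (σ i))
  -- exponent bookkeeping
  have hexp : ∑ c : Fin N, (σ c).1.1 = ∑ j ∈ Finset.Icc 1 κ, j * Module.finrank ℂ (V j) := by
    rw [Equiv.sum_comp σ (fun c' => (c'.1.1 : ℕ))]
    have h1 : ∑ c' : (j : Fin (κ + 1)) × Fin (d j), (c'.1.1 : ℕ)
        = ∑ j : Fin (κ + 1), d j * j.1 := by
      rw [← Finset.univ_sigma_univ, Finset.sum_sigma]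
      simp [Finset.sum_const, smul_eq_mul]
    have h2 : ∑ j : Fin (κ + 1), d j * j.1
        = ∑ n ∈ Finset.range (κ + 1), Module.finrank ℂ (V n) * n :=
      Fin.sum_univ_eq_sum_range (fun n => Module.finrank ℂ (V n) * n) (κ + 1)
    have h3 : ∑ n ∈ Finset.range (κ + 1), Module.finrank ℂ (V n) * n
        = ∑ j ∈ Finset.Icc 1 κ, Module.finrank ℂ (V j) * j := by
      refine (Finset.sum_subset ?_ ?_).symm
      · intro x hx
        simp only [Finset.mem_Icc] at hx
        simp only [Finset.mem_range]
        omega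
      · intro x hx hnx
        simp only [Finset.mem_range] at hx
        simp only [Finset.mem_Icc, not_and, not_le] at hnx
        have hx0 : x = 0 := by omega
        simp [hx0]
    rw [h1, h2, h3]
    exact Finset.sum_congr rfl fun j _ => mul_comm _ _
  refine ⟨fun z => (G z).det * (B.det)⁻¹, hGdet_an.mul analyticAt_const, ?_, ?_⟩
  · have hG0 : G lam₀ = Wm := by
      ext r c
      exact hval r (σ c)
    show (G lam₀).det * (B.det)⁻¹ ≠ 0
    rw [hG0]
    exact mul_ne_zero hWdet (inv_ne_zero hBdet)
  · have hall : ∀ᶠ z in nhds lam₀, ∀ (r : Fin N) (c : (j : Fin (κ + 1)) × Fin (d j)),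
        ((𝔏 z).mulVec (e c)) r = (z - lam₀) ^ c.1.1 * h r c z := by
      rw [Filter.eventually_all]
      intro r
      rw [Filter.eventually_all]
      intro c
      exact hev r c
    filter_upwards [hall] with z hz
    have hMB : 𝔏 z * B = Matrix.of fun r c => (z - lam₀) ^ (σ c).1.1 * G z r c := by
      ext r c
      have h1 : (𝔏 z * B) r c = ((𝔏 z).mulVec (e (σ c))) r := by
        simp [Matrix.mul_apply, Matrix.mulVec, dotProduct, hBdef]
      rw [h1, hz r (σ c)]
      rfl
    have hdet : (𝔏 z).det * B.det
        = (z - lam₀) ^ (∑ j ∈ Finset.Icc 1 κ, j * Module.finrank ℂ (V j)) * (G z).det := by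
      rw [← Matrix.det_mul, hMB,
        Matrix.det_mul_row (fun c => (z - lam₀) ^ (σ c).1.1) (G z)]
      congr 1
      rw [Finset.prod_pow_eq_pow_sum, hexp]
    show (𝔏 z).det = _ * ((G z).det * (B.det)⁻¹)
    rw [← mul_assoc, ← hdet, mul_assoc, mul_inv_cancel₀ hBdet, mul_one]
end

section
/- The ratio of the alternating Gaussian sum to the Gaussian sum over the integers equals 2^{−1/4}; that is, ∑_{n ∈ ℤ} (−1)^n e^{−π n²} = 2^{−1/4} · ∑_{n ∈ ℤ} e^{−π n²}. (This ratio is the value of the global torsion invariant of the Möbius bundle over the circle ℝ/2√π ℤ.) -/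
open Real

noncomputable section TorsionAux

private def eS : ℤ → ℝ := fun n => rexp (-π * (n : ℝ) ^ 2)
private def eA : ℤ → ℝ := fun n => (-1 : ℝ) ^ n * rexp (-π * (n : ℝ) ^ 2)
private def eB : ℤ → ℝ := fun n => rexp (-π * ((n : ℝ) + 1/2) ^ 2)
private def eT : ℤ → ℝ := fun n => rexp (-π * 2 * (n : ℝ) ^ 2)
private def eC : ℤ → ℝ := fun n => rexp (-π * 2 * ((n : ℝ) + 1/2) ^ 2)
private def eF : ℤ → ℝ := fun n => rexp (-π * (1/2) * (n : ℝ) ^ 2)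
private def eG : ℤ → ℝ := fun n => (-1 : ℝ) ^ n * rexp (-π * (1/2) * (n : ℝ) ^ 2)

end TorsionAux

private lemma summable_gauss (a c : ℝ) (ha : 0 < a) :
    Summable fun n : ℤ => rexp (-π * a * ((n : ℝ) + c) ^ 2) := by
  have h := summable_pow_mul_jacobiTheta₂_term_bound (a * |c|) ha 0
  simp only [pow_zero, one_mul] at h
  refine h.of_nonneg_of_le (fun n => (Real.exp_pos _).le) (fun n => ?_)
  rw [Real.exp_le_exp, Int.cast_abs]
  have h3 : 0 ≤ 2 * (c * (n:ℝ)) + c ^ 2 + 2 * (|c| * |(n:ℝ)|) := by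
    nlinarith [neg_abs_le (c * (n:ℝ)), abs_mul c (n:ℝ), sq_nonneg c]
  nlinarith [mul_nonneg (mul_nonneg pi_pos.le ha.le) h3]

private lemma sS : Summable eS :=
  (summable_gauss 1 0 one_pos).congr fun n => by simp [eS]
private lemma sB : Summable eB :=
  (summable_gauss 1 (1/2) one_pos).congr fun n => by simp [eB]
private lemma sT : Summable eT :=
  (summable_gauss 2 0 two_pos).congr fun n => by simp [eT]
private lemma sC : Summable eC :=
  (summable_gauss 2 (1/2) two_pos).congr fun n => by simp [eC]
private lemma sF : Summable eF :=
  (summable_gauss (1/2) 0 one_half_pos).congr fun n => by simp [eF]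

private lemma abs_neg_one_zpow' (n : ℤ) : |(-1 : ℝ) ^ n| = 1 := by
  rcases Int.even_or_odd n with h | h
  · rw [h.neg_one_zpow, abs_one]
  · rw [h.neg_one_zpow, abs_neg, abs_one]

private lemma nS : Summable fun n => ‖eS n‖ := by
  simpa only [eS, Real.norm_eq_abs, Real.abs_exp] using (show Summable fun n => eS n from sS)
private lemma nA : Summable fun n => ‖eA n‖ := by
  simpa only [eA, eS, Real.norm_eq_abs, abs_mul, abs_neg_one_zpow', one_mul, Real.abs_exp] using (show Summable fun n => eS n from sS)
private lemma nB : Summable fun n => ‖eB n‖ := by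
  simpa only [eB, Real.norm_eq_abs, Real.abs_exp] using (show Summable fun n => eB n from sB)
private lemma nT : Summable fun n => ‖eT n‖ := by
  simpa only [eT, Real.norm_eq_abs, Real.abs_exp] using (show Summable fun n => eT n from sT)
private lemma nC : Summable fun n => ‖eC n‖ := by
  simpa only [eC, Real.norm_eq_abs, Real.abs_exp] using (show Summable fun n => eC n from sC)
private lemma nF : Summable fun n => ‖eF n‖ := by
  simpa only [eF, Real.norm_eq_abs, Real.abs_exp] using (show Summable fun n => eF n from sF)
private lemma nG : Summable fun n => ‖eG n‖ := by
  simpa only [eG, eF, Real.norm_eq_abs, abs_mul, abs_neg_one_zpow', one_mul, Real.abs_exp] using (show Summable fun n => eF n from sF)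

private lemma sA : Summable eA := nA.of_norm
private lemma sG : Summable eG := nG.of_norm

private lemma tsum_prod_sq (f : ℤ → ℝ) (hf : Summable fun n => ‖f n‖) :
    (∑' x : ℤ × ℤ, f x.1 * f x.2) = (∑' n, f n) ^ 2 := by
  rw [sq, tsum_mul_tsum_of_summable_norm hf hf]

private lemma poisson_alt : (∑' n, eA n) = ∑' n, eB n := by
  have key := Complex.tsum_exp_neg_quadratic (a := 1) (by norm_num) (Complex.I / 2)
  simp only [mul_one, Complex.one_cpow, div_one, one_div, inv_one, one_mul] at key
  have h1 : ∀ n : ℤ, Complex.exp (-↑π * ↑n ^ 2 + 2 * ↑π * (Complex.I / 2) * ↑n)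
      = ((-1 : ℝ) ^ n * rexp (-π * (n : ℝ) ^ 2) : ℝ) := by
    intro n
    rw [Complex.exp_add]
    have h2 : (2 : ℂ) * ↑π * (Complex.I / 2) * ↑n = ↑n * (↑π * Complex.I) := by ring
    rw [h2, Complex.exp_int_mul, Complex.exp_pi_mul_I]
    push_cast
    ring
  have h2 : ∀ n : ℤ, Complex.exp (-↑π * (↑n + Complex.I * (Complex.I / 2)) ^ 2)
      = ((rexp (-π * ((n : ℝ) - 1/2) ^ 2) : ℝ) : ℂ) := by
    intro n
    rw [Complex.ofReal_exp, show Complex.I * (Complex.I / 2) = -(1/2 : ℂ) by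
      rw [← mul_div_assoc, Complex.I_mul_I]; norm_num]
    congr 1
    push_cast
    ring
  simp_rw [h1, h2, ← Complex.ofReal_tsum] at key
  rw [Complex.ofReal_inj] at key
  show (∑' n : ℤ, (-1 : ℝ) ^ n * rexp (-π * (n : ℝ) ^ 2))
      = ∑' n : ℤ, rexp (-π * ((n : ℝ) + 1/2) ^ 2)
  rw [key, ← (Equiv.addRight (1 : ℤ)).tsum_eq (fun m : ℤ => rexp (-π * ((m : ℝ) - 1/2) ^ 2))]
  refine tsum_congr fun n => ?_
  simp only [Equiv.coe_addRight]
  push_cast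
  ring_nf

private lemma reindex_even2 (a : ℝ) :
    (∑' x : ℤ × ℤ, (1 + (-1 : ℝ) ^ (x.1 + x.2)) * rexp (-π * a * ((x.1 : ℝ) ^ 2 + (x.2 : ℝ) ^ 2)))
      = ∑' y : ℤ × ℤ, 2 * rexp (-π * a * (2 * ((y.1 : ℝ) ^ 2 + (y.2 : ℝ) ^ 2))) := by
  have hinj : Function.Injective (fun y : ℤ × ℤ => (y.1 + y.2, y.1 - y.2)) := by
    intro y y' h
    rw [Prod.mk.injEq] at h
    obtain ⟨h1, h2⟩ := h
    exact Prod.ext (by omega) (by omega)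
  have hsupp : Function.support
      (fun x : ℤ × ℤ =>
        (1 + (-1 : ℝ) ^ (x.1 + x.2)) * rexp (-π * a * ((x.1 : ℝ) ^ 2 + (x.2 : ℝ) ^ 2)))
      ⊆ Set.range (fun y : ℤ × ℤ => (y.1 + y.2, y.1 - y.2)) := by
    rintro ⟨x1, x2⟩ hx
    simp only [Function.mem_support] at hx
    rcases Int.even_or_odd (x1 + x2) with he | ho
    · obtain ⟨k, hk⟩ := he
      exact ⟨(k, x1 - k), Prod.ext (show k + (x1 - k) = x1 by omega)
        (show k - (x1 - k) = x2 by omega)⟩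
    · exfalso
      apply hx
      rw [ho.neg_one_zpow]
      ring
  rw [← hinj.tsum_eq hsupp]
  refine tsum_congr fun y => ?_
  simp only
  have he : Even (y.1 + y.2 + (y.1 - y.2)) := ⟨y.1, by ring⟩
  rw [he.neg_one_zpow, show ((1:ℝ) + 1) = 2 by norm_num]
  congr 1
  push_cast
  ring

private lemma reindex_odd2 (a : ℝ) :
    (∑' x : ℤ × ℤ, (1 - (-1 : ℝ) ^ (x.1 + x.2)) * rexp (-π * a * ((x.1 : ℝ) ^ 2 + (x.2 : ℝ) ^ 2)))
      = ∑' y : ℤ × ℤ,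
          2 * rexp (-π * a * (2 * (((y.1 : ℝ) + 1/2) ^ 2 + ((y.2 : ℝ) + 1/2) ^ 2))) := by
  have hinj : Function.Injective (fun y : ℤ × ℤ => (y.1 + y.2 + 1, y.1 - y.2)) := by
    intro y y' h
    rw [Prod.mk.injEq] at h
    obtain ⟨h1, h2⟩ := h
    exact Prod.ext (by omega) (by omega)
  have hsupp : Function.support
      (fun x : ℤ × ℤ =>
        (1 - (-1 : ℝ) ^ (x.1 + x.2)) * rexp (-π * a * ((x.1 : ℝ) ^ 2 + (x.2 : ℝ) ^ 2)))
      ⊆ Set.range (fun y : ℤ × ℤ => (y.1 + y.2 + 1, y.1 - y.2)) := by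
    rintro ⟨x1, x2⟩ hx
    simp only [Function.mem_support] at hx
    rcases Int.even_or_odd (x1 + x2) with he | ho
    · exfalso
      apply hx
      rw [he.neg_one_zpow]
      ring
    · obtain ⟨k, hk⟩ := ho
      exact ⟨(k, x1 - k - 1), Prod.ext (show k + (x1 - k - 1) + 1 = x1 by omega)
        (show k - (x1 - k - 1) = x2 by omega)⟩
  rw [← hinj.tsum_eq hsupp]
  refine tsum_congr fun y => ?_
  simp only
  have ho : Odd (y.1 + y.2 + 1 + (y.1 - y.2)) := ⟨y.1, by ring⟩
  rw [ho.neg_one_zpow, show ((1:ℝ) - -1) = 2 by norm_num]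
  congr 1
  push_cast
  ring

private lemma reindex_even1 (a : ℝ) :
    (∑' n : ℤ, (1 + (-1 : ℝ) ^ n) * rexp (-π * a * (n : ℝ) ^ 2))
      = ∑' p : ℤ, 2 * rexp (-π * a * (4 * (p : ℝ) ^ 2)) := by
  have hinj : Function.Injective (fun p : ℤ => 2 * p) := by
    intro p q h
    simp only at h
    omega
  have hsupp : Function.support
      (fun n : ℤ => (1 + (-1 : ℝ) ^ n) * rexp (-π * a * (n : ℝ) ^ 2))
      ⊆ Set.range (fun p : ℤ => 2 * p) := by
    intro n hn
    simp only [Function.mem_support] at hn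
    rcases Int.even_or_odd n with he | ho
    · obtain ⟨k, hk⟩ := he
      exact ⟨k, show 2 * k = n by omega⟩
    · exfalso
      apply hn
      rw [ho.neg_one_zpow]
      ring
  rw [← hinj.tsum_eq hsupp]
  refine tsum_congr fun p => ?_
  have he : Even (2 * p) := ⟨p, by ring⟩
  rw [he.neg_one_zpow, show ((1:ℝ) + 1) = 2 by norm_num]
  congr 1
  push_cast
  ring

private lemma reindex_odd1 (a : ℝ) :
    (∑' n : ℤ, (1 - (-1 : ℝ) ^ n) * rexp (-π * a * (n : ℝ) ^ 2))
      = ∑' p : ℤ, 2 * rexp (-π * a * (4 * ((p : ℝ) + 1/2) ^ 2)) := by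
  have hinj : Function.Injective (fun p : ℤ => 2 * p + 1) := by
    intro p q h
    simp only at h
    omega
  have hsupp : Function.support
      (fun n : ℤ => (1 - (-1 : ℝ) ^ n) * rexp (-π * a * (n : ℝ) ^ 2))
      ⊆ Set.range (fun p : ℤ => 2 * p + 1) := by
    intro n hn
    simp only [Function.mem_support] at hn
    rcases Int.even_or_odd n with he | ho
    · exfalso
      apply hn
      rw [he.neg_one_zpow]
      ring
    · obtain ⟨k, hk⟩ := ho
      exact ⟨k, show 2 * k + 1 = n by omega⟩
  rw [← hinj.tsum_eq hsupp]
  refine tsum_congr fun p => ?_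
  have ho : Odd (2 * p + 1) := ⟨p, rfl⟩
  rw [ho.neg_one_zpow, show ((1:ℝ) - -1) = 2 by norm_num]
  congr 1
  push_cast
  ring

private lemma ident_i : (∑' n, eS n) ^ 2 + (∑' n, eA n) ^ 2 = 2 * (∑' n, eT n) ^ 2 := by
  have pSS : Summable fun x : ℤ × ℤ => eS x.1 * eS x.2 := summable_mul_of_summable_norm nS nS
  have pAA : Summable fun x : ℤ × ℤ => eA x.1 * eA x.2 := summable_mul_of_summable_norm nA nA
  have e1 := reindex_even2 1
  have hterm : ∀ x : ℤ × ℤ,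
      (1 + (-1 : ℝ) ^ (x.1 + x.2)) * rexp (-π * 1 * ((x.1 : ℝ) ^ 2 + (x.2 : ℝ) ^ 2))
      = eS x.1 * eS x.2 + eA x.1 * eA x.2 := by
    intro x
    rw [zpow_add₀ (by norm_num : (-1:ℝ) ≠ 0)]
    simp only [eS, eA]
    rw [show -π * 1 * ((x.1 : ℝ) ^ 2 + (x.2 : ℝ) ^ 2)
        = (-π * (x.1 : ℝ) ^ 2) + (-π * (x.2 : ℝ) ^ 2) by ring, Real.exp_add]
    ring
  have hterm2 : ∀ y : ℤ × ℤ, 2 * rexp (-π * 1 * (2 * ((y.1 : ℝ) ^ 2 + (y.2 : ℝ) ^ 2)))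
      = 2 * (eT y.1 * eT y.2) := by
    intro y
    simp only [eT]
    rw [show -π * 1 * (2 * ((y.1 : ℝ) ^ 2 + (y.2 : ℝ) ^ 2))
        = (-π * 2 * (y.1 : ℝ) ^ 2) + (-π * 2 * (y.2 : ℝ) ^ 2) by ring, Real.exp_add]
  rw [tsum_congr hterm, tsum_congr hterm2] at e1
  rw [Summable.tsum_add pSS pAA, tsum_mul_left, tsum_prod_sq eS nS, tsum_prod_sq eA nA,
    tsum_prod_sq eT nT] at e1
  exact e1

private lemma ident_ii : (∑' n, eS n) ^ 2 - (∑' n, eA n) ^ 2 = 2 * (∑' n, eC n) ^ 2 := by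
  have pSS : Summable fun x : ℤ × ℤ => eS x.1 * eS x.2 := summable_mul_of_summable_norm nS nS
  have pAA : Summable fun x : ℤ × ℤ => eA x.1 * eA x.2 := summable_mul_of_summable_norm nA nA
  have e2 := reindex_odd2 1
  have hterm : ∀ x : ℤ × ℤ,
      (1 - (-1 : ℝ) ^ (x.1 + x.2)) * rexp (-π * 1 * ((x.1 : ℝ) ^ 2 + (x.2 : ℝ) ^ 2))
      = eS x.1 * eS x.2 - eA x.1 * eA x.2 := by
    intro x
    rw [zpow_add₀ (by norm_num : (-1:ℝ) ≠ 0)]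
    simp only [eS, eA]
    rw [show -π * 1 * ((x.1 : ℝ) ^ 2 + (x.2 : ℝ) ^ 2)
        = (-π * (x.1 : ℝ) ^ 2) + (-π * (x.2 : ℝ) ^ 2) by ring, Real.exp_add]
    ring
  have hterm2 : ∀ y : ℤ × ℤ,
      2 * rexp (-π * 1 * (2 * (((y.1 : ℝ) + 1/2) ^ 2 + ((y.2 : ℝ) + 1/2) ^ 2)))
      = 2 * (eC y.1 * eC y.2) := by
    intro y
    simp only [eC]
    rw [show -π * 1 * (2 * (((y.1 : ℝ) + 1/2) ^ 2 + ((y.2 : ℝ) + 1/2) ^ 2))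
        = (-π * 2 * ((y.1 : ℝ) + 1/2) ^ 2) + (-π * 2 * ((y.2 : ℝ) + 1/2) ^ 2) by ring,
      Real.exp_add]
  rw [tsum_congr hterm, tsum_congr hterm2] at e2
  rw [Summable.tsum_sub pSS pAA, tsum_mul_left, tsum_prod_sq eS nS, tsum_prod_sq eA nA,
    tsum_prod_sq eC nC] at e2
  exact e2

private lemma ident_iii : (∑' n, eF n) ^ 2 - (∑' n, eG n) ^ 2 = 2 * (∑' n, eB n) ^ 2 := by
  have pFF : Summable fun x : ℤ × ℤ => eF x.1 * eF x.2 := summable_mul_of_summable_norm nF nF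
  have pGG : Summable fun x : ℤ × ℤ => eG x.1 * eG x.2 := summable_mul_of_summable_norm nG nG
  have e3 := reindex_odd2 (1/2)
  have hterm : ∀ x : ℤ × ℤ,
      (1 - (-1 : ℝ) ^ (x.1 + x.2)) * rexp (-π * (1/2) * ((x.1 : ℝ) ^ 2 + (x.2 : ℝ) ^ 2))
      = eF x.1 * eF x.2 - eG x.1 * eG x.2 := by
    intro x
    rw [zpow_add₀ (by norm_num : (-1:ℝ) ≠ 0)]
    simp only [eF, eG]
    rw [show -π * (1/2) * ((x.1 : ℝ) ^ 2 + (x.2 : ℝ) ^ 2)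
        = (-π * (1/2) * (x.1 : ℝ) ^ 2) + (-π * (1/2) * (x.2 : ℝ) ^ 2) by ring, Real.exp_add]
    ring
  have hterm2 : ∀ y : ℤ × ℤ,
      2 * rexp (-π * (1/2) * (2 * (((y.1 : ℝ) + 1/2) ^ 2 + ((y.2 : ℝ) + 1/2) ^ 2)))
      = 2 * (eB y.1 * eB y.2) := by
    intro y
    simp only [eB]
    rw [show -π * (1/2) * (2 * (((y.1 : ℝ) + 1/2) ^ 2 + ((y.2 : ℝ) + 1/2) ^ 2))
        = (-π * ((y.1 : ℝ) + 1/2) ^ 2) + (-π * ((y.2 : ℝ) + 1/2) ^ 2) by ring, Real.exp_add]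
  rw [tsum_congr hterm, tsum_congr hterm2] at e3
  rw [Summable.tsum_sub pFF pGG, tsum_mul_left, tsum_prod_sq eF nF, tsum_prod_sq eG nG,
    tsum_prod_sq eB nB] at e3
  exact e3

private lemma ident_iv : (∑' n, eF n) + (∑' n, eG n) = 2 * ∑' n, eT n := by
  have e4 := reindex_even1 (1/2)
  have hterm : ∀ n : ℤ, (1 + (-1 : ℝ) ^ n) * rexp (-π * (1/2) * (n : ℝ) ^ 2)
      = eF n + eG n := by
    intro n
    simp only [eF, eG]
    ring
  have hterm2 : ∀ p : ℤ, 2 * rexp (-π * (1/2) * (4 * (p : ℝ) ^ 2)) = 2 * eT p := by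
    intro p
    simp only [eT]
    congr 1
    ring_nf
  rw [tsum_congr hterm, tsum_congr hterm2] at e4
  rw [Summable.tsum_add sF sG, tsum_mul_left] at e4
  exact e4

private lemma ident_v : (∑' n, eF n) - (∑' n, eG n) = 2 * ∑' n, eC n := by
  have e5 := reindex_odd1 (1/2)
  have hterm : ∀ n : ℤ, (1 - (-1 : ℝ) ^ n) * rexp (-π * (1/2) * (n : ℝ) ^ 2)
      = eF n - eG n := by
    intro n
    simp only [eF, eG]
    ring
  have hterm2 : ∀ p : ℤ, 2 * rexp (-π * (1/2) * (4 * ((p : ℝ) + 1/2) ^ 2)) = 2 * eC p := by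
    intro p
    simp only [eC]
    congr 1
    ring_nf
  rw [tsum_congr hterm, tsum_congr hterm2] at e5
  rw [Summable.tsum_sub sF sG, tsum_mul_left] at e5
  exact e5

/-- The ratio of the alternating Gaussian sum to the Gaussian sum over `ℤ` is
`2^{-1/4}`: the global torsion invariant of the Möbius bundle over `ℝ/2√π ℤ`. -/
theorem tsum_alt_exp_neg_pi_sq_eq_rpow_mul :
    ∑' n : ℤ, (-1 : ℝ) ^ n * Real.exp (-Real.pi * (n : ℝ) ^ 2) =
      (2 : ℝ) ^ (-(1 : ℝ) / 4) * ∑' n : ℤ, Real.exp (-Real.pi * (n : ℝ) ^ 2) := by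
  suffices h : (∑' n, eA n) = (2 : ℝ) ^ (-(1 : ℝ) / 4) * ∑' n, eS n from h
  have hAB : (∑' n, eA n) = ∑' n, eB n := poisson_alt
  have hB2 : (∑' n, eB n) ^ 2 = 2 * (∑' n, eT n) * (∑' n, eC n) := by
    linear_combination (-(1:ℝ)/2) * ident_iii
      + (((∑' n, eF n) - ∑' n, eG n) / 2) * ident_iv + (∑' n, eT n) * ident_v
  have key : ((∑' n, eS n) ^ 2 + (∑' n, eA n) ^ 2) * ((∑' n, eS n) ^ 2 - (∑' n, eA n) ^ 2)
      = (2 * (∑' n, eT n) ^ 2) * (2 * (∑' n, eC n) ^ 2) := by rw [ident_i, ident_ii]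
  have hB4 : ((∑' n, eB n) ^ 2) ^ 2 = (2 * (∑' n, eT n) * (∑' n, eC n)) ^ 2 := by rw [hB2]
  have hA4 : (∑' n, eA n) ^ 4 = (∑' n, eB n) ^ 4 := by rw [hAB]
  have hS4 : (∑' n, eS n) ^ 4 = 2 * (∑' n, eA n) ^ 4 := by
    linear_combination key - hB4 - hA4
  have hBpos : 0 < ∑' n, eB n := Summable.tsum_pos sB (fun n => (Real.exp_pos _).le) 0 (Real.exp_pos _)
  have hApos : 0 < ∑' n, eA n := hAB ▸ hBpos
  have hSpos : 0 < ∑' n, eS n := Summable.tsum_pos sS (fun n => (Real.exp_pos _).le) 0 (Real.exp_pos _)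
  have hr4 : ((2 : ℝ) ^ (-(1 : ℝ) / 4)) ^ (4 : ℕ) = 1 / 2 := by
    rw [← Real.rpow_natCast ((2 : ℝ) ^ (-(1 : ℝ) / 4)) 4,
      ← Real.rpow_mul (by norm_num : (0:ℝ) ≤ 2),
      show -(1 : ℝ) / 4 * (4 : ℕ) = -1 by push_cast; ring, Real.rpow_neg_one]
    norm_num
  have hpow : (∑' n, eA n) ^ (4 : ℕ) = ((2 : ℝ) ^ (-(1 : ℝ) / 4) * ∑' n, eS n) ^ (4 : ℕ) := by
    rw [mul_pow, hr4]
    linarith [hS4]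
  exact (pow_left_inj₀ hApos.le
    (mul_nonneg (Real.rpow_nonneg (by norm_num) _) hSpos.le) (by norm_num)).mp hpow
end

section
/- Fix n ∈ ℕ and signs ε₁, …, ε_n ∈ {−1, 1}, and let m be the number of indices i with ε_i = −1. Then ∑_{k ∈ ℤⁿ} (∏_{i=1}^{n} ε_i^{k_i}) · e^{−π(k₁² + ⋯ + k_n²)} = 2^{−m/4} · ∑_{k ∈ ℤⁿ} e^{−π(k₁² + ⋯ + k_n²)}. (Consequently the set of values of the global torsion invariant of the n-dimensional torus ℝⁿ/(2√π ℤ)ⁿ is {2^{−m/4} : 0 ≤ m ≤ n}.) -/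
open Real
noncomputable section
namespace TT

def G (t : ℝ) (k : ℤ) : ℝ := Real.exp (-π * t * (k:ℝ)^2)
def χ (k : ℤ) : ℝ := (-1:ℝ) ^ k
def Gs (t : ℝ) (k : ℤ) : ℝ := χ k * G t k

lemma G_pos (t : ℝ) (k : ℤ) : 0 < G t k := Real.exp_pos _

lemma χ_sq (k : ℤ) : χ k * χ k = 1 := by
  rw [χ, ← zpow_add₀ (by norm_num : (-1:ℝ) ≠ 0)]
  exact Even.neg_one_zpow ⟨k, rfl⟩

lemma χ_add (a b : ℤ) : χ (a + b) = χ a * χ b :=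
  zpow_add₀ (by norm_num : (-1:ℝ) ≠ 0) a b

lemma χ_abs (k : ℤ) : |χ k| = 1 := by
  rcases Int.even_or_odd k with h | h
  · rw [χ, h.neg_one_zpow]; norm_num
  · rw [χ, h.neg_one_zpow]; norm_num

lemma χ_neg (k : ℤ) : χ (-k) = χ k := by
  have h := χ_sq k
  rw [χ, zpow_neg, ← χ]
  exact (eq_inv_of_mul_eq_one_left h).symm

lemma abs_Gs (t : ℝ) (k : ℤ) : |Gs t k| = G t k := by
  rw [Gs, abs_mul, χ_abs, one_mul, abs_of_pos (G_pos t k)]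

lemma summable_nat_G {t : ℝ} (ht : 0 < t) :
    Summable fun n : ℕ => Real.exp (-π * t * (n:ℝ)^2) := by
  have hr1 : Real.exp (-π * t) < 1 :=
    Real.exp_lt_one_iff.2 (by nlinarith [pi_pos])
  refine Summable.of_nonneg_of_le (fun n => (Real.exp_pos _).le) (fun n => ?_)
    (summable_geometric_of_lt_one (Real.exp_pos _).le hr1)
  rw [← Real.exp_nat_mul]
  apply Real.exp_le_exp.2
  have hn : (n:ℝ) ≤ (n:ℝ)^2 := by
    have := Nat.le_self_pow (two_ne_zero) n
    exact_mod_cast this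
  have h2 := mul_le_mul_of_nonneg_left hn (mul_pos pi_pos ht).le
  nlinarith

lemma summable_G {t : ℝ} (ht : 0 < t) : Summable (G t) := by
  apply Summable.of_nat_of_neg <;>
  · apply (summable_nat_G ht).congr
    intro n
    simp [G]

lemma summable_Gs {t : ℝ} (ht : 0 < t) : Summable (Gs t) := by
  refine Summable.of_abs ?_
  simp only [abs_Gs]
  exact summable_G ht

end TT

namespace TT2
open TT

lemma summable_GG {t : ℝ} (ht : 0 < t) :
    Summable fun p : ℤ×ℤ => G t p.1 * G t p.2 :=
  (summable_G ht).mul_of_nonneg (summable_G ht)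
    (fun k => (G_pos t k).le) (fun k => (G_pos t k).le)

lemma summable_bdd {t : ℝ} (ht : 0 < t) {c : ℤ×ℤ → ℝ} (hc : ∀ p, |c p| ≤ 2) :
    Summable fun p : ℤ×ℤ => c p * (G t p.1 * G t p.2) := by
  apply Summable.of_abs
  refine Summable.of_nonneg_of_le (fun p => abs_nonneg _) (fun p => ?_)
    ((summable_GG ht).mul_left 2)
  rw [abs_mul]
  have h1 : 0 ≤ G t p.1 * G t p.2 := mul_nonneg (G_pos _ _).le (G_pos _ _).le
  rw [abs_of_nonneg h1]
  exact mul_le_mul_of_nonneg_right (hc p) h1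

lemma sq_tsum {f : ℤ → ℝ} (hf : Summable fun k => |f k|) :
    (∑' k, f k)^2 = ∑' p : ℤ×ℤ, f p.1 * f p.2 := by
  rw [pow_two]
  exact tsum_mul_tsum_of_summable_norm (by simpa using hf) (by simpa using hf)

def rot : ℤ×ℤ → ℤ×ℤ := fun p => (p.1 + p.2, p.1 - p.2)

lemma rot_inj : Function.Injective rot := by
  intro p q h
  simp only [rot, Prod.mk.injEq] at h
  ext <;> omega

lemma mem_range_rot {p : ℤ×ℤ} (h : Even (p.1 + p.2)) : p ∈ Set.range rot := by
  obtain ⟨r, hr⟩ := h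
  refine ⟨(r, p.1 - r), ?_⟩
  have : r + (p.1 - r) = p.1 ∧ r - (p.1 - r) = p.2 := by constructor <;> omega
  simp only [rot]
  exact Prod.ext this.1 this.2

lemma χχ_of_odd {a b : ℤ} (h : ¬ Even (a + b)) : χ a * χ b = -1 := by
  rw [← χ_add, χ]
  exact (Int.not_even_iff_odd.1 h).neg_one_zpow

lemma χχ_rot (u v : ℤ) : χ (u+v) * χ (u-v) = 1 := by
  rw [χ_add, sub_eq_add_neg, χ_add, χ_neg]
  nlinarith [χ_sq u, χ_sq v, χ_abs u, χ_abs v]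

lemma G_rot (t : ℝ) (u v : ℤ) : G t (u+v) * G t (u-v) = G (2*t) u * G (2*t) v := by
  simp only [G, ← Real.exp_add]
  congr 1
  push_cast
  ring

lemma E1 {t : ℝ} (ht : 0 < t) :
    (∑' k, G t k)^2 + (∑' k, Gs t k)^2 = 2 * (∑' k, G (2*t) k)^2 := by
  have h2t : 0 < 2*t := by linarith
  have hGabs : Summable fun k => |G t k| := (summable_G ht).abs
  have hGsabs : Summable fun k => |Gs t k| := by
    simp only [abs_Gs]; exact summable_G ht
  rw [sq_tsum hGabs, sq_tsum hGsabs, sq_tsum ((summable_G h2t).abs)]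
  have hpt : ∀ p : ℤ×ℤ, Gs t p.1 * Gs t p.2 = (χ p.1 * χ p.2) * (G t p.1 * G t p.2) := by
    intro p; simp only [Gs]; ring
  simp only [hpt]
  have s1 : Summable fun p : ℤ×ℤ => G t p.1 * G t p.2 := summable_GG ht
  have s2 : Summable fun p : ℤ×ℤ => (χ p.1 * χ p.2) * (G t p.1 * G t p.2) :=
    summable_bdd ht (fun p => by
      rw [abs_mul, χ_abs, χ_abs]; norm_num)
  rw [← Summable.tsum_add s1 s2]
  have key : ∀ p : ℤ×ℤ, G t p.1 * G t p.2 + (χ p.1 * χ p.2) * (G t p.1 * G t p.2)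
      = (1 + χ p.1 * χ p.2) * (G t p.1 * G t p.2) := fun p => by ring
  simp only [key]
  rw [← rot_inj.tsum_eq (f := fun p : ℤ×ℤ => (1 + χ p.1 * χ p.2) * (G t p.1 * G t p.2))]
  · rw [← tsum_mul_left]
    congr 1
    ext q
    simp only [rot]
    rw [χχ_rot, G_rot]
    ring
  · intro p hp
    apply mem_range_rot
    by_contra h
    apply hp
    simp only [χχ_of_odd h]
    simp

lemma χ_sub (u v : ℤ) : χ (u - v) = χ u * χ v := by
  rw [sub_eq_add_neg, χ_add, χ_neg]

lemma χ_cases (k : ℤ) : χ k = 1 ∨ χ k = -1 := by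
  rcases Int.even_or_odd k with h | h
  · exact Or.inl (h.neg_one_zpow)
  · exact Or.inr (h.neg_one_zpow)

lemma E3 {t : ℝ} (ht : 0 < t) :
    (∑' k, G t k) * (∑' k, Gs t k) = (∑' k, Gs (2*t) k)^2 := by
  have h2t : 0 < 2*t := by linarith
  have hGsabs2 : Summable fun k => |Gs (2*t) k| := by
    simp only [abs_Gs]; exact summable_G h2t
  rw [sq_tsum hGsabs2,
    tsum_mul_tsum_of_summable_norm (by simpa using (summable_G ht).abs)
      (by simpa [abs_Gs] using summable_G ht)]
  set E : ℤ×ℤ → ℝ := fun p => ((1 + χ p.1 * χ p.2)/2 * χ p.2) * (G t p.1 * G t p.2) with hE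
  set O : ℤ×ℤ → ℝ := fun p => ((1 - χ p.1 * χ p.2)/2 * χ p.2) * (G t p.1 * G t p.2) with hO
  have habs : ∀ x y : ℤ, ∀ s : ℝ, (s = 1 ∨ s = -1) → |(1 + s * χ x * χ y)/2 * χ y| ≤ 2 := by
    intro x y s hs
    rcases χ_cases x with hx | hx <;> rcases χ_cases y with hy | hy <;>
      rcases hs with h | h <;> rw [hx, hy, h] <;> norm_num
  have sE : Summable E := summable_bdd ht (fun p => by
    simpa using habs p.1 p.2 1 (Or.inl rfl))
  have sO : Summable O := summable_bdd ht (fun p => by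
    have := habs p.1 p.2 (-1) (Or.inr rfl)
    simpa [sub_eq_add_neg, neg_mul] using this)
  have hsplit : ∀ p : ℤ×ℤ, G t p.1 * Gs t p.2 = E p + O p := by
    intro p
    simp only [hE, hO, Gs]
    ring
  simp only [hsplit]
  rw [Summable.tsum_add sE sO]
  have hO0 : ∑' p, O p = 0 := by
    have he := (Equiv.prodComm ℤ ℤ).tsum_eq O
    have hneg : ∀ p : ℤ×ℤ, O ((Equiv.prodComm ℤ ℤ) p) = - O p := by
      intro p
      simp only [hO, Equiv.prodComm_apply, Prod.fst_swap, Prod.snd_swap]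
      rcases χ_cases p.1 with h1 | h1 <;> rcases χ_cases p.2 with h2 | h2 <;>
        rw [h1, h2] <;> ring
    rw [tsum_congr hneg, tsum_neg] at he
    linarith
  rw [hO0, add_zero]
  rw [← rot_inj.tsum_eq (f := E)]
  · apply tsum_congr
    intro q
    simp only [hE, rot]
    rw [χ_sub, χ_add, G_rot]
    simp only [Gs]
    rcases χ_cases q.1 with h1 | h1 <;> rcases χ_cases q.2 with h2 | h2 <;>
      rw [h1, h2] <;> ring
  · intro p hp
    apply mem_range_rot
    by_contra h
    apply hp
    have := χχ_of_odd h
    simp only [hE, this]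
    simp

lemma poisson : (∑' k, G (1/2) k)^2 = 2 * (∑' k, G 2 k)^2 := by
  have h := Real.tsum_exp_neg_mul_int_sq (a := 2) (by norm_num)
  have h1 : ∑' k : ℤ, Real.exp (-π / 2 * (k:ℝ)^2) = ∑' k, G (1/2) k := by
    apply tsum_congr; intro k; rw [G]; ring_nf
  have h2 : ∑' k : ℤ, Real.exp (-π * 2 * (k:ℝ)^2) = ∑' k, G 2 k := rfl
  rw [h1, h2] at h
  have hs : ((2:ℝ) ^ ((1:ℝ)/2))^2 = 2 := by
    rw [← Real.rpow_natCast ((2:ℝ) ^ ((1:ℝ)/2)) 2, ← Real.rpow_mul (by norm_num)]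
    norm_num
  have hpos : (0:ℝ) < (2:ℝ) ^ ((1:ℝ)/2) := Real.rpow_pos_of_pos (by norm_num) _
  rw [h]
  field_simp
  nlinarith [hs]

lemma T_pos : 0 < ∑' k, G 1 k := by
  refine Summable.tsum_pos (summable_G one_pos) (fun k => (G_pos 1 k).le) 0 (G_pos 1 0)

lemma geom_tail_bound {f : ℕ → ℝ} (hf : ∀ n, |f n| ≤ Real.exp (-π) ^ (n+1)) :
    Summable f ∧ -(Real.exp (-π) * (1 - Real.exp (-π))⁻¹) ≤ ∑' n, f n := by
  set r : ℝ := Real.exp (-π) with hrdef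
  have hr0 : 0 < r := Real.exp_pos _
  have hr1 : r < 1 := Real.exp_lt_one_iff.2 (by simpa using pi_pos)
  have hgeom : Summable fun n : ℕ => r ^ (n+1) :=
    ((summable_geometric_of_lt_one hr0.le hr1).mul_left r).congr (fun n => by ring)
  have hsum : Summable f := by
    apply Summable.of_abs
    exact Summable.of_nonneg_of_le (fun n => abs_nonneg _) hf hgeom
  refine ⟨hsum, ?_⟩
  have h1 : ∑' n, f n ≥ ∑' n : ℕ, -(r ^ (n+1)) := by
    apply Summable.tsum_le_tsum _ hgeom.neg hsum
    intro n
    have := hf n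
    rw [abs_le] at this
    linarith [this.1]
  have h2 : ∑' n : ℕ, -(r ^ (n+1)) = -(r * (1-r)⁻¹) := by
    rw [tsum_neg]
    congr 1
    have : ∑' n : ℕ, r^(n+1) = r * ∑' n : ℕ, r^n := by
      rw [← tsum_mul_left]
      exact tsum_congr fun n => by ring
    rw [this, tsum_geometric_of_lt_one hr0.le hr1]
  linarith [h1, h2.symm.trans_le h1.le, h2 ▸ h1]

lemma exp_sq_le (n : ℕ) : |Gs 1 (n+1)| ≤ Real.exp (-π) ^ (n+1) := by
  rw [abs_Gs, G, ← Real.exp_nat_mul]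
  apply Real.exp_le_exp.2
  have h1 : ((n:ℝ)+1) ≤ ((n:ℝ)+1)^2 := by nlinarith [Nat.cast_nonneg (α := ℝ) n]
  have := mul_le_mul_of_nonneg_left h1 pi_pos.le
  push_cast
  nlinarith

lemma A_pos : 0 < ∑' k, Gs 1 k := by
  set r : ℝ := Real.exp (-π) with hrdef
  have hr0 : 0 < r := Real.exp_pos _
  have hr3 : r < 1/3 := by
    rw [hrdef, Real.exp_neg]
    rw [show (1:ℝ)/3 = 3⁻¹ by norm_num, inv_lt_inv₀ (Real.exp_pos _) (by norm_num)]
    calc (3:ℝ) < π + 1 := by linarith [pi_gt_three]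
    _ ≤ Real.exp π := by linarith [Real.add_one_le_exp π]
  have hb1 := geom_tail_bound (f := fun n : ℕ => Gs 1 ((n:ℤ)+1)) (fun n => by
    have := exp_sq_le n
    simpa using this)
  have hb2 := geom_tail_bound (f := fun n : ℕ => Gs 1 (-((n:ℤ)+1))) (fun n => by
    have := exp_sq_le n
    rw [abs_Gs] at this ⊢
    simp only [G] at this ⊢
    rw [show ((-((n:ℤ)+1) : ℤ) : ℝ) = -(((n:ℤ)+1 : ℤ) : ℝ) by push_cast; ring, neg_sq]
    exact this)
  have hsplit : ∑' k : ℤ, Gs 1 k =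
      (∑' n : ℕ, Gs 1 (n:ℤ)) + ∑' n : ℕ, Gs 1 (-((n:ℤ)+1)) := by
    apply tsum_of_nat_of_neg_add_one
    · refine (summable_nat_add_iff 1).1 (hb1.1.congr fun n => by push_cast; ring_nf)
    · exact hb2.1.congr (fun n => by norm_num)
  have hzero : ∑' n : ℕ, Gs 1 (n:ℤ) = 1 + ∑' n : ℕ, Gs 1 ((n:ℤ)+1) := by
    rw [Summable.tsum_eq_zero_add ((summable_nat_add_iff 1).1 (hb1.1.congr fun n => by push_cast; ring_nf))]
    congr 1
    show Gs 1 0 = 1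
    simp [Gs, G, χ]
  rw [hsplit, hzero]
  have hq : r * (1-r)⁻¹ < 1/2 := by
    rw [mul_inv_lt_iff₀ (by linarith)]
    linarith
  linarith [hb1.2, hb2.2]

lemma one_dim : ∑' k, Gs 1 k = (2:ℝ) ^ (-(1/4) : ℝ) * ∑' k, G 1 k := by
  set T := ∑' k, G 1 k with hT
  set A := ∑' k, Gs 1 k with hA
  set B := ∑' k, G 2 k with hB
  set C := ∑' k, Gs (1/2) k with hC
  set D := ∑' k, G (1/2) k with hD
  have e1 := E1 (t := 1/2) (by norm_num)
  have e2 := E1 (t := 1) one_pos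
  have e3 := E3 (t := 1/2) (by norm_num)
  norm_num at e1 e2 e3
  -- e1 : D^2 + C^2 = 2*T^2, e2 : T^2 + A^2 = 2*B^2, e3 : D*C = A^2
  have p : D^2 = 2*B^2 := poisson
  have key : 2 * A^4 = T^4 := by
    have hA4 : A^2*A^2 = D^2 * C^2 := by rw [← e3]; ring
    have hC2 : C^2 = 2*T^2 - 2*B^2 := by linarith
    have h1 : A^2*A^2 = (2*B^2)*(2*T^2 - 2*B^2) := by rw [hA4, p, hC2]
    have hb : (2:ℝ)*B^2 = T^2 + A^2 := by linarith
    rw [hb] at h1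
    linear_combination h1
  set c : ℝ := (2:ℝ) ^ (-(1/4) : ℝ) with hc
  have hcpos : 0 < c := Real.rpow_pos_of_pos (by norm_num) _
  have hc4 : c^4 = 1/2 := by
    rw [hc, ← Real.rpow_natCast ((2:ℝ) ^ (-(1/4):ℝ)) 4, ← Real.rpow_mul (by norm_num)]
    norm_num
  have h4 : A^4 = (c*T)^4 := by
    have : (c*T)^4 = c^4 * T^4 := by ring
    rw [this, hc4]
    linarith
  exact (pow_left_inj₀ A_pos.le (mul_pos hcpos T_pos).le (by norm_num)).1 h4

lemma prod_summable_abs : ∀ (n : ℕ) (F : Fin n → ℤ → ℝ),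
    (∀ i, Summable fun k => |F i k|) →
    Summable fun k : Fin n → ℤ => |∏ i, F i (k i)| := by
  intro n
  induction n with
  | zero => intro F hF; exact .of_finite
  | succ n ih =>
    intro F hF
    rw [← (Fin.consEquiv (fun _ : Fin (n+1) => ℤ)).summable_iff]
    have : ∀ p : ℤ × (Fin n → ℤ),
        |∏ i, F i ((Fin.consEquiv (fun _ : Fin (n+1) => ℤ)) p i)| =
        |F 0 p.1| * |∏ i : Fin n, F i.succ (p.2 i)| := by
      intro p
      rw [← abs_mul]
      congr 1
      rw [Fin.prod_univ_succ]
      simp [Fin.consEquiv]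
    exact ((hF 0).mul_of_nonneg (ih (fun i => F i.succ) (fun i => hF i.succ))
      (fun k => abs_nonneg _) (fun k => abs_nonneg _)).congr (fun p => (this p).symm)

lemma tsum_prod_fin : ∀ (n : ℕ) (F : Fin n → ℤ → ℝ),
    (∀ i, Summable fun k => |F i k|) →
    ∑' k : Fin n → ℤ, ∏ i, F i (k i) = ∏ i, ∑' k, F i k := by
  intro n
  induction n with
  | zero =>
    intro F hF
    rw [Finset.univ_eq_empty, Finset.prod_empty]
    rw [tsum_eq_single (fun _ => 0) (fun b hb => absurd (Subsingleton.elim b _) hb)]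
    exact Finset.prod_empty
  | succ n ih =>
    intro F hF
    rw [← (Fin.consEquiv (fun _ : Fin (n+1) => ℤ)).tsum_eq]
    have hpt : ∀ p : ℤ × (Fin n → ℤ),
        (∏ i, F i ((Fin.consEquiv (fun _ : Fin (n+1) => ℤ)) p i)) =
        F 0 p.1 * ∏ i : Fin n, F i.succ (p.2 i) := by
      intro p
      rw [Fin.prod_univ_succ]
      simp [Fin.consEquiv]
    have h1 : Summable fun k : ℤ => ‖F 0 k‖ := by
      simpa only [Real.norm_eq_abs] using hF 0
    have h2 : Summable fun b : Fin n → ℤ => ‖∏ i : Fin n, F i.succ (b i)‖ := by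
      simpa only [Real.norm_eq_abs]
        using prod_summable_abs n (fun i => F i.succ) (fun i => hF i.succ)
    have key := tsum_mul_tsum_of_summable_norm (R := ℝ) (f := F 0)
      (g := fun b : Fin n → ℤ => ∏ i : Fin n, F i.succ (b i)) h1 h2
    rw [tsum_congr hpt, Fin.prod_univ_succ,
      ← ih (fun i => F i.succ) (fun i => hF i.succ), key]

end TT2
end

/-- For signs `ε₁, …, ε_n ∈ {−1, 1}` with `m` of them equal to `−1`,
`∑_{k ∈ ℤⁿ} (∏ i, ε_i^{k_i}) e^{−π ∑ k_i²} = 2^{−m/4} ∑_{k ∈ ℤⁿ} e^{−π ∑ k_i²}`: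
the values of the global torsion invariant of the `n`-torus are `2^{−m/4}`, `0 ≤ m ≤ n`. -/
theorem tsum_signed_gaussian_lattice
    (n : ℕ) (ε : Fin n → ℝ) (hε : ∀ i, ε i = -1 ∨ ε i = 1)
    (m : ℕ) (hm : m = Set.ncard {i : Fin n | ε i = -1}) :
    ∑' k : Fin n → ℤ,
        (∏ i, ε i ^ (k i)) * Real.exp (-Real.pi * ∑ i, ((k i : ℝ) ^ 2)) =
      (2 : ℝ) ^ (-(m : ℝ) / 4) *
        ∑' k : Fin n → ℤ, Real.exp (-Real.pi * ∑ i, ((k i : ℝ) ^ 2)) := by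
  classical
  open TT TT2 in
  set F : Fin n → ℤ → ℝ := fun i k => ε i ^ k * Real.exp (-Real.pi * (k:ℝ)^2) with hF
  have hFG : ∀ i k, F i k = (if ε i = -1 then Gs 1 k else G 1 k) := by
    intro i k
    by_cases h' : ε i = -1
    · rw [if_pos h', hF]
      simp only [h', Gs, G, χ]
      ring_nf
    · have h1 : ε i = 1 := (hε i).resolve_left h'
      rw [if_neg h', hF]
      simp only [h1, one_zpow, one_mul, G]
      ring_nf
  have habs : ∀ i, Summable fun k => |F i k| := by
    intro i
    apply Summable.congr (summable_G one_pos)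
    intro k
    rw [hFG i k]
    split
    · exact (abs_Gs 1 k).symm
    · exact (abs_of_pos (G_pos 1 k)).symm
  have habs' : ∀ i : Fin n, Summable fun k : ℤ => |Real.exp (-Real.pi * (k:ℝ)^2)| := by
    intro i
    apply Summable.congr (summable_G one_pos)
    intro k
    rw [abs_of_pos (Real.exp_pos _), G]
    ring_nf
  set T := ∑' k, G 1 k with hT
  set c : ℝ := (2:ℝ) ^ (-(1/4) : ℝ) with hc
  have hsum_i : ∀ i, ∑' k, F i k = (if ε i = -1 then c else 1) * T := by
    intro i
    rw [tsum_congr (hFG i)]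
    split
    · exact one_dim
    · rw [one_mul]
  -- LHS rewrite
  have hL : ∀ k : Fin n → ℤ,
      (∏ i, ε i ^ (k i)) * Real.exp (-Real.pi * ∑ i, ((k i : ℝ) ^ 2)) = ∏ i, F i (k i) := by
    intro k
    simp only [hF]
    rw [Finset.prod_mul_distrib]
    congr 1
    rw [Finset.mul_sum, ← Real.exp_sum]
  have hR : ∀ k : Fin n → ℤ,
      Real.exp (-Real.pi * ∑ i, ((k i : ℝ) ^ 2)) =
        ∏ i, Real.exp (-Real.pi * ((k i : ℝ))^2) := by
    intro k
    rw [← Real.exp_sum, Finset.mul_sum]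
  rw [tsum_congr hL, tsum_congr hR, tsum_prod_fin n F habs,
    tsum_prod_fin n (fun _ k => Real.exp (-Real.pi * (k:ℝ)^2)) habs']
  have hRT : ∀ i : Fin n, ∑' k : ℤ, Real.exp (-Real.pi * (k:ℝ)^2) = T := by
    intro i
    rw [hT]
    exact tsum_congr fun k => by rw [G]; ring_nf
  rw [Finset.prod_congr rfl (fun i _ => hsum_i i),
    Finset.prod_congr rfl (fun i _ => hRT i),
    Finset.prod_mul_distrib, Finset.prod_const]
  have hcard : (Finset.univ.filter (fun i : Fin n => ε i = -1)).card = m := by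
    rw [hm, Set.ncard_eq_toFinset_card', Set.toFinset_setOf]
  rw [Finset.prod_ite, Finset.prod_const, Finset.prod_const_one, mul_one, hcard]
  have hcm : c ^ m = (2:ℝ) ^ (-(m:ℝ)/4) := by
    rw [hc, ← Real.rpow_natCast ((2:ℝ) ^ (-(1/4):ℝ)) m, ← Real.rpow_mul (by norm_num)]
    congr 1
    ring
  rw [hcm]
end
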